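/- Let H be Hermitian on a finite-dimensional Hilbert space and let 𝒫 be the orthogonal projector onto the span of M orthonormal vectors ψ_1, …, ψ_M satisfying ‖(H − E_m)ψ_m‖ ≤ δ for some reals E_m. Then ‖[H, 𝒫]‖ ≤ 2√M · δ. -/

import Mathlib

open scoped ComplexInnerProductSpace

lemma orthonormal_norm_sq_sum {E : Type*} [NormedAddCommGroup E] [InnerProductSpace ℂ E]
    {ι : Type*} [Fintype ι] {v : ι → E} (hv : Orthonormal ℂ v) (f : ι → ℂ) :
    ‖∑ i, f i • v i‖ ^ 2 = ∑ i, ‖f i‖ ^ 2 := by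
  have h := hv.inner_sum f f Finset.univ
  have h2 : (‖∑ i, f i • v i‖ : ℝ) ^ 2 = Complex.re ⟪∑ i, f i • v i, ∑ i, f i • v i⟫ :=
    norm_sq_eq_re_inner (𝕜 := ℂ) _
  rw [h2, h, Complex.re_sum]
  refine Finset.sum_congr rfl fun i _ => ?_
  rw [← Complex.normSq_eq_conj_mul_self, Complex.ofReal_re, Complex.normSq_eq_norm_sq]

/-- Commutator bound for the projector onto a family of `M` orthonormal δ-almost
eigenstates: `‖[H, Pr]‖ ≤ 2√M · δ`. -/
theorem commutator_projector_almost_eigenstates {d M : ℕ}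
    (H Pr : EuclideanSpace ℂ (Fin d) →L[ℂ] EuclideanSpace ℂ (Fin d))
    (hH : IsSelfAdjoint H)
    (ψ : Fin M → EuclideanSpace ℂ (Fin d))
    (hortho : Orthonormal ℂ ψ)
    (E : Fin M → ℝ) (δ : ℝ)
    (hae : ∀ m, ‖H (ψ m) - (E m : ℂ) • ψ m‖ ≤ δ)
    (hPr : ∀ x, Pr x = ∑ m, ⟪ψ m, x⟫ • ψ m) :
    ‖H ∘L Pr - Pr ∘L H‖ ≤ 2 * Real.sqrt M * δ := by
  rcases Nat.eq_zero_or_pos M with h0 | hpos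
  · subst h0
    have hz : H ∘L Pr - Pr ∘L H = 0 := by
      ext x
      simp [ContinuousLinearMap.comp_apply, hPr]
    rw [hz, norm_zero]
    simp
  have hδ : (0:ℝ) ≤ δ := le_trans (norm_nonneg _) (hae ⟨0, hpos⟩)
  have hsym : ∀ x y, ⟪H x, y⟫ = ⟪x, H y⟫ :=
    ContinuousLinearMap.isSelfAdjoint_iff_isSymmetric.mp hH
  set r : Fin M → EuclideanSpace ℂ (Fin d) := fun m => H (ψ m) - (E m : ℂ) • ψ m with hr
  have hrδ : ∀ m, ‖r m‖ ≤ δ := hae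
  have h2 : ∀ m : Fin M, H (ψ m) = r m + (E m : ℂ) • ψ m := by
    intro m; simp [hr]
  have h1 : ∀ x, ∀ m : Fin M, ⟪ψ m, H x⟫ = ⟪r m, x⟫ + (E m : ℂ) * ⟪ψ m, x⟫ := by
    intro x m
    rw [← hsym, h2 m, inner_add_left, inner_smul_left, Complex.conj_ofReal]
  have key : ∀ x, (H ∘L Pr - Pr ∘L H) x
      = (∑ m, ⟪ψ m, x⟫ • r m) - ∑ m, ⟪r m, x⟫ • ψ m := by
    intro x
    simp only [ContinuousLinearMap.sub_apply, ContinuousLinearMap.comp_apply, hPr,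
      map_sum, map_smul]
    rw [← Finset.sum_sub_distrib, ← Finset.sum_sub_distrib]
    apply Finset.sum_congr rfl
    intro m _
    rw [h1 x m, h2 m]
    module
  have hs : Real.sqrt M ^ 2 = (M:ℝ) := Real.sq_sqrt (by positivity)
  refine ContinuousLinearMap.opNorm_le_bound _ (by positivity) ?_
  intro x
  rw [key]
  have bA : ‖∑ m, ⟪ψ m, x⟫ • r m‖ ≤ Real.sqrt M * δ * ‖x‖ := by
    calc ‖∑ m, ⟪ψ m, x⟫ • r m‖ ≤ ∑ m, ‖⟪ψ m, x⟫‖ * ‖r m‖ := by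
          refine (norm_sum_le _ _).trans ?_
          apply Finset.sum_le_sum
          intro m _
          rw [norm_smul]
      _ ≤ Real.sqrt ((∑ m, ‖⟪ψ m, x⟫‖ ^ 2) * ∑ m, ‖r m‖ ^ 2) := by
          rw [← Real.sqrt_sq (by positivity : (0:ℝ) ≤ ∑ m : Fin M, ‖⟪ψ m, x⟫‖ * ‖r m‖)]
          exact Real.sqrt_le_sqrt (Finset.sum_mul_sq_le_sq_mul_sq _ _ _)
      _ ≤ Real.sqrt (‖x‖ ^ 2 * (M * δ ^ 2)) := by
          apply Real.sqrt_le_sqrt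
          apply mul_le_mul (hortho.sum_inner_products_le x) ?_ (by positivity) (by positivity)
          calc ∑ m, ‖r m‖ ^ 2 ≤ ∑ _m : Fin M, δ ^ 2 :=
                Finset.sum_le_sum fun m _ => pow_le_pow_left₀ (norm_nonneg _) (hrδ m) 2
            _ = M * δ ^ 2 := by simp [Finset.sum_const]
      _ = Real.sqrt M * δ * ‖x‖ := by
          rw [show ‖x‖ ^ 2 * ((M:ℝ) * δ ^ 2) = (Real.sqrt M * δ * ‖x‖)^2 from by
            linear_combination (-(‖x‖^2 * δ^2)) * hs]
          exact Real.sqrt_sq (by positivity)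
  have bB : ‖∑ m, ⟪r m, x⟫ • ψ m‖ ≤ Real.sqrt M * δ * ‖x‖ := by
    have hsq : ‖∑ m, ⟪r m, x⟫ • ψ m‖ ^ 2 ≤ (Real.sqrt M * δ * ‖x‖) ^ 2 := by
      rw [orthonormal_norm_sq_sum hortho]
      calc ∑ m, ‖⟪r m, x⟫‖ ^ 2 ≤ ∑ _m : Fin M, (δ * ‖x‖) ^ 2 := by
            apply Finset.sum_le_sum
            intro m _
            apply pow_le_pow_left₀ (norm_nonneg _)
            exact (norm_inner_le_norm _ _).trans
              (mul_le_mul_of_nonneg_right (hrδ m) (norm_nonneg _))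
        _ = (M:ℝ) * (δ * ‖x‖) ^ 2 := by simp [Finset.sum_const]
        _ = (Real.sqrt M * δ * ‖x‖) ^ 2 := by
            linear_combination (-(δ * ‖x‖)^2) * hs
    have h1' : (0:ℝ) ≤ Real.sqrt M * δ * ‖x‖ := by positivity
    have := Real.sqrt_le_sqrt hsq
    rwa [Real.sqrt_sq (norm_nonneg _), Real.sqrt_sq h1'] at this
  calc ‖(∑ m, ⟪ψ m, x⟫ • r m) - ∑ m, ⟪r m, x⟫ • ψ m‖
      ≤ ‖∑ m, ⟪ψ m, x⟫ • r m‖ + ‖∑ m, ⟪r m, x⟫ • ψ m‖ := norm_sub_le _ _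
    _ ≤ Real.sqrt M * δ * ‖x‖ + Real.sqrt M * δ * ‖x‖ := add_le_add bA bB
    _ = 2 * Real.sqrt M * δ * ‖x‖ := by ring
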